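/- Let f : ℝ^d → ℝ be L-smooth, h : ℝ^d → ℝ convex, F = f + h, γ > 0, and v ∈ ℝ^d arbitrary. Set x̄ := prox_{γh}(x − γ v). Then for every w ∈ ℝ^d: F(x̄) ≤ F(w) + ⟨∇f(x) − v, x̄ − w⟩ − (1/γ)⟨x̄ − x, x̄ − w⟩ + (L/2)‖x̄ − x‖² + (L/2)‖w − x‖². -/

import Mathlib

open RealInnerProductSpace

private lemma descent_aux {n : ℕ} (f : EuclideanSpace ℝ (Fin n) → ℝ) {L : ℝ}
    (hdiff : Differentiable ℝ f)
    (hL : ∀ x y, ‖gradient f x - gradient f y‖ ≤ L * ‖x - y‖)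
    (x y : EuclideanSpace ℝ (Fin n)) :
    f y ≤ f x + ⟪gradient f x, y - x⟫ + L / 2 * ‖y - x‖ ^ 2 := by
  set D : EuclideanSpace ℝ (Fin n) := y - x with hD
  set φ : ℝ → ℝ := fun t => f (x + t • D) - t * ⟪gradient f x, D⟫ - L * t ^ 2 / 2 * ‖D‖ ^ 2
    with hφ
  have hderiv : ∀ t : ℝ, HasDerivAt φ
      (⟪gradient f (x + t • D), D⟫ - ⟪gradient f x, D⟫ - L * t * ‖D‖ ^ 2) t := by
    intro t
    have hc : HasDerivAt (fun t : ℝ => x + t • D) D t := by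
      simpa using ((hasDerivAt_id t).smul_const D).const_add x
    have h1 : HasDerivAt (fun t : ℝ => f (x + t • D)) ⟪gradient f (x + t • D), D⟫ t := by
      have := ((hdiff (x + t • D)).hasGradientAt.hasFDerivAt).comp_hasDerivAt t hc
      simp only [InnerProductSpace.toDual_apply_apply] at this ⊢
      exact this
    have h2 : HasDerivAt (fun t : ℝ => t * ⟪gradient f x, D⟫) ⟪gradient f x, D⟫ t := by
      simpa using (hasDerivAt_id t).mul_const (⟪gradient f x, D⟫)
    have h3 : HasDerivAt (fun t : ℝ => L * t ^ 2 / 2 * ‖D‖ ^ 2) (L * t * ‖D‖ ^ 2) t := by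
      have hp : HasDerivAt (fun t : ℝ => t ^ 2) (2 * t) t := by
        simpa using hasDerivAt_pow 2 t
      have := ((hp.const_mul L).div_const 2).mul_const (‖D‖ ^ 2)
      exact this.congr_deriv (by ring)
    exact (h1.sub h2).sub h3
  have hanti : AntitoneOn φ (Set.Icc (0:ℝ) 1) := by
    apply antitoneOn_of_deriv_nonpos (convex_Icc 0 1)
    · exact fun t _ => (hderiv t).continuousAt.continuousWithinAt
    · exact fun t _ => (hderiv t).differentiableAt.differentiableWithinAt
    · intro t ht
      rw [interior_Icc] at ht
      rw [(hderiv t).deriv]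
      have hinner : ⟪gradient f (x + t • D), D⟫ - ⟪gradient f x, D⟫
          = ⟪gradient f (x + t • D) - gradient f x, D⟫ := (inner_sub_left _ _ _).symm
      have hb : ⟪gradient f (x + t • D) - gradient f x, D⟫ ≤ L * t * ‖D‖ ^ 2 := by
        calc ⟪gradient f (x + t • D) - gradient f x, D⟫
            ≤ ‖gradient f (x + t • D) - gradient f x‖ * ‖D‖ := real_inner_le_norm _ _
          _ ≤ (L * ‖(x + t • D) - x‖) * ‖D‖ :=
              mul_le_mul_of_nonneg_right (hL _ _) (norm_nonneg _)
          _ = L * t * ‖D‖ ^ 2 := by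
              have : (x + t • D) - x = t • D := by abel
              rw [this, norm_smul, Real.norm_eq_abs, abs_of_pos ht.1]; ring
      linarith [hinner ▸ hb]
  have h01 : φ 1 ≤ φ 0 := hanti (by norm_num) (by norm_num) (by norm_num)
  have e1 : x + (1:ℝ) • D = y := by rw [one_smul, hD]; abel
  simp only [hφ, e1, zero_smul, add_zero, one_pow, one_mul] at h01
  linarith

theorem prox_function_value_bound (d : ℕ) (f h : EuclideanSpace ℝ (Fin d) → ℝ)
    (hconv : ConvexOn ℝ Set.univ h) (γ L : ℝ) (hγ : 0 < γ)
    (hdiff : Differentiable ℝ f)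
    (hL : ∀ x y, ‖gradient f x - gradient f y‖ ≤ L * ‖x - y‖)
    (x v xb : EuclideanSpace ℝ (Fin d))
    (hxb : ∀ y, h xb + ‖xb - (x - γ • v)‖ ^ 2 / (2 * γ)
      ≤ h y + ‖y - (x - γ • v)‖ ^ 2 / (2 * γ))
    (F : EuclideanSpace ℝ (Fin d) → ℝ) (hF : F = fun z => f z + h z) :
    ∀ w, F xb ≤ F w + ⟪gradient f x - v, xb - w⟫ - (1 / γ) * ⟪xb - x, xb - w⟫
      + L / 2 * ‖xb - x‖ ^ 2 + L / 2 * ‖w - x‖ ^ 2 := by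
  intro w
  -- descent lemma for f at x, evaluated at xb (upper) and w (lower)
  have hup : f xb ≤ f x + ⟪gradient f x, xb - x⟫ + L / 2 * ‖xb - x‖ ^ 2 :=
    descent_aux f hdiff hL x xb
  -- lower bound via -f
  have hgradneg : ∀ z, gradient (fun u => -(f u)) z = -(gradient f z) := by
    intro z
    have h1 : HasGradientAt f (gradient f z) z := (hdiff z).hasGradientAt
    have h2 : HasGradientAt (fun u => -(f u)) (-(gradient f z)) z := by
      have := h1.hasFDerivAt.neg
      rw [hasFDerivAt_iff_hasGradientAt] at this
      show HasGradientAt (-f) (-(gradient f z)) z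
      simpa [gradient] using this
    exact ((hdiff z).neg.hasGradientAt).unique h2
  have hlow : f x + ⟪gradient f x, w - x⟫ - L / 2 * ‖w - x‖ ^ 2 ≤ f w := by
    have hdn : Differentiable ℝ (fun u => -(f u)) := hdiff.neg
    have hLn : ∀ a b, ‖gradient (fun u => -(f u)) a - gradient (fun u => -(f u)) b‖
        ≤ L * ‖a - b‖ := by
      intro a b
      rw [hgradneg, hgradneg]
      have : -gradient f a - -gradient f b = -(gradient f a - gradient f b) := by abel
      rw [this, norm_neg]
      exact hL a b
    have := descent_aux (fun u => -(f u)) hdn hLn x w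
    rw [hgradneg, inner_neg_left] at this
    linarith
  -- h part via prox optimality and convexity
  set z : EuclideanSpace ℝ (Fin d) := x - γ • v with hz
  have hkey : ∀ t : ℝ, 0 < t → t ≤ 1 →
      h xb ≤ h w + ⟪xb - z, w - xb⟫ / γ + t * (‖w - xb‖ ^ 2 / (2 * γ)) := by
    intro t ht0 ht1
    have hyt := hxb (xb + t • (w - xb))
    have hconvxy : h (xb + t • (w - xb)) ≤ (1 - t) * h xb + t * h w := by
      have := hconv.2 (Set.mem_univ xb) (Set.mem_univ w) (by linarith : (0:ℝ) ≤ 1 - t)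
        (le_of_lt ht0) (by ring)
      have he : (1 - t) • xb + t • w = xb + t • (w - xb) := by
        rw [sub_smul, smul_sub, one_smul]; abel
      rw [he] at this
      simpa using this
    have hnorm : ‖(xb + t • (w - xb)) - z‖ ^ 2
        = ‖xb - z‖ ^ 2 + 2 * (t * ⟪xb - z, w - xb⟫) + t ^ 2 * ‖w - xb‖ ^ 2 := by
      have he : (xb + t • (w - xb)) - z = (xb - z) + t • (w - xb) := by abel
      rw [he, norm_add_sq_real, real_inner_smul_right, norm_smul, Real.norm_eq_abs,
        mul_pow, sq_abs]
    rw [hnorm] at hyt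
    have h2γ : 0 < 2 * γ := by linarith
    have hineq : h xb - ((1 - t) * h xb + t * h w)
        ≤ (2 * (t * ⟪xb - z, w - xb⟫) + t ^ 2 * ‖w - xb‖ ^ 2) / (2 * γ) := by
      have hsplit : (‖xb - z‖ ^ 2 + 2 * (t * ⟪xb - z, w - xb⟫) + t ^ 2 * ‖w - xb‖ ^ 2)
          / (2 * γ) = ‖xb - z‖ ^ 2 / (2 * γ)
          + (2 * (t * ⟪xb - z, w - xb⟫) + t ^ 2 * ‖w - xb‖ ^ 2) / (2 * γ) := by ring
      rw [hsplit] at hyt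
      linarith
    have hstep : t * (h xb - h w)
        ≤ t * ((2 * ⟪xb - z, w - xb⟫ + t * ‖w - xb‖ ^ 2) / (2 * γ)) := by
      calc t * (h xb - h w) = h xb - ((1 - t) * h xb + t * h w) := by ring
        _ ≤ (2 * (t * ⟪xb - z, w - xb⟫) + t ^ 2 * ‖w - xb‖ ^ 2) / (2 * γ) := hineq
        _ = t * ((2 * ⟪xb - z, w - xb⟫ + t * ‖w - xb‖ ^ 2) / (2 * γ)) := by ring
    have ht' : h xb - h w ≤ (2 * ⟪xb - z, w - xb⟫ + t * ‖w - xb‖ ^ 2) / (2 * γ) :=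
      le_of_mul_le_mul_left hstep ht0
    have heq : (2 * ⟪xb - z, w - xb⟫ + t * ‖w - xb‖ ^ 2) / (2 * γ)
        = ⟪xb - z, w - xb⟫ / γ + t * (‖w - xb‖ ^ 2 / (2 * γ)) := by
      field_simp
    rw [heq] at ht'
    linarith
  have hh : h xb ≤ h w + ⟪xb - z, w - xb⟫ / γ := by
    by_contra hcon
    push_neg at hcon
    set ε := h xb - (h w + ⟪xb - z, w - xb⟫ / γ) with hε
    have hεpos : 0 < ε := by rw [hε]; linarith
    set C := ‖w - xb‖ ^ 2 / (2 * γ) with hC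
    have hC0 : 0 ≤ C := div_nonneg (sq_nonneg _) (by linarith)
    have ht0 : 0 < min 1 (ε / (2 * (C + 1))) :=
      lt_min one_pos (div_pos hεpos (by linarith))
    have ht1 : min 1 (ε / (2 * (C + 1))) ≤ 1 := min_le_left _ _
    have hK := hkey _ ht0 ht1
    have htC : min 1 (ε / (2 * (C + 1))) * C < ε := by
      have h1 : min 1 (ε / (2 * (C + 1))) ≤ ε / (2 * (C + 1)) := min_le_right _ _
      have h2 : min 1 (ε / (2 * (C + 1))) * C ≤ (ε / (2 * (C + 1))) * C :=
        mul_le_mul_of_nonneg_right h1 hC0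
      have hfrac : (ε / (2 * (C + 1))) * C < ε := by
        rw [div_mul_eq_mul_div, div_lt_iff₀ (by linarith)]
        nlinarith
      linarith
    linarith
  -- combine everything
  have hinnereq : ⟪gradient f x, xb - x⟫ - ⟪gradient f x, w - x⟫ + ⟪xb - z, w - xb⟫ / γ
      = ⟪gradient f x - v, xb - w⟫ - (1 / γ) * ⟪xb - x, xb - w⟫ := by
    simp only [hz, inner_sub_left, inner_sub_right, real_inner_smul_left,
      real_inner_smul_right]
    field_simp
    ring
  rw [hF]
  simp only
  linarith [hup, hlow, hh, hinnereq]
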